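/- With the setup of the previous identity (Ric_t(V_x)=0, Ric_t image in H_x, A_t(H_x) ⊆ V_x, A_t(V_x)=0, A_0=0, Q and Q̂ solving dQ_t = −½Ric_t Q_t dt and dQ̂_t = −½(id−A_t)Ric_t(id+A_t)Q̂_t dt with identity initial condition): for any absolutely continuous k : [0,T] → H_x with k_0 = 0, if h_t = Q_t ∫₀^t Q_s^{-1} dk_s, then (id + A_t) Q̂_t ∫₀^t Q̂_s^{-1}(id − A_s) dk_s = h_t + ∫₀^t dA_s h_s. -/

import Mathlib

open ContinuousLinearMap

/-- **Conversion between the damped gradient and the gradient (Lemma 3.7).**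
Same pathwise setup as for the identity `(id+A_t)Q̂_t = Q_t + ∫₀ᵗ dA_r Q_r`:
in `T_xM = H ⊕ V`, `Ric_t` vanishes on `V` with image in `H`; `A_t(H) ⊆ V`,
`A_t(V) = 0`, `A_0 = 0`; `Q, Q̂` the fundamental solutions of
`dQ = −½ Ric_t Q dt` and `dQ̂ = −½(id−A)Ric(id+A)Q̂ dt`.  For any absolutely
continuous `k : [0,T] → H` with `k_0 = 0`, setting `h_t = Q_t ∫₀ᵗ Q_s^{-1} dk_s`,
one has `(id + A_t) Q̂_t ∫₀ᵗ Q̂_s^{-1}(id − A_s) dk_s = h_t + ∫₀ᵗ dA_s h_s`. -/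
theorem stmt11 {E : Type*} [NormedAddCommGroup E] [NormedSpace ℝ E]
    [FiniteDimensional ℝ E]
    (Hs Vs : Submodule ℝ E) (hcompl : IsCompl Hs Vs)
    (Ric : ℝ → E →L[ℝ] E) (hRic_cont : Continuous Ric)
    (hRicV : ∀ t, ∀ v ∈ Vs, Ric t v = 0)
    (hRicH : ∀ t x, Ric t x ∈ Hs)
    (A A' : ℝ → E →L[ℝ] E)
    (hA : ∀ t, HasDerivAt A (A' t) t) (hA'_cont : Continuous A')
    (hA0 : A 0 = 0)
    (hAH : ∀ t, ∀ h ∈ Hs, A t h ∈ Vs)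
    (hAV : ∀ t, ∀ v ∈ Vs, A t v = 0)
    (Q Qh : ℝ → E →L[ℝ] E)
    (hQ0 : Q 0 = ContinuousLinearMap.id ℝ E)
    (hQ : ∀ t, HasDerivAt Q (-(1 / 2 : ℝ) • (Ric t).comp (Q t)) t)
    (hQh0 : Qh 0 = ContinuousLinearMap.id ℝ E)
    (hQh : ∀ t, HasDerivAt Qh (-(1 / 2 : ℝ) •
      ((ContinuousLinearMap.id ℝ E - A t).comp
        ((Ric t).comp ((ContinuousLinearMap.id ℝ E + A t).comp (Qh t))))) t)
    (Qinv Qhinv : ℝ → E →L[ℝ] E)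
    (hQinv : ∀ t, (Qinv t).comp (Q t) = ContinuousLinearMap.id ℝ E ∧
      (Q t).comp (Qinv t) = ContinuousLinearMap.id ℝ E)
    (hQhinv : ∀ t, (Qhinv t).comp (Qh t) = ContinuousLinearMap.id ℝ E ∧
      (Qh t).comp (Qhinv t) = ContinuousLinearMap.id ℝ E)
    (k k' : ℝ → E)
    (hk : ∀ t, HasDerivAt k (k' t) t) (hk'_cont : Continuous k')
    (hk0 : k 0 = 0)
    (hkH : ∀ t, k t ∈ Hs) (hk'H : ∀ t, k' t ∈ Hs)
    (h : ℝ → E)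
    (hh : ∀ t, h t = Q t (∫ s in (0:ℝ)..t, Qinv s (k' s))) :
    ∀ t, ((ContinuousLinearMap.id ℝ E + A t).comp (Qh t))
        (∫ s in (0:ℝ)..t, Qhinv s ((ContinuousLinearMap.id ℝ E - A s) (k' s)))
      = h t + ∫ s in (0:ℝ)..t, A' s (h s) := by
  classical
  -- projection onto Hs with kernel Vs
  set π : E →L[ℝ] E :=
    LinearMap.toContinuousLinearMap
      (Hs.subtype ∘ₗ (Submodule.projectionOnto Hs Vs hcompl)) with hπdef
  have hπmem : ∀ x : E, x ∈ Vs ↔ π x = 0 := by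
    intro x
    constructor
    · intro hx
      simp [hπdef, Submodule.projectionOnto_apply_of_mem_right hcompl hx]
    · intro hx
      have h0 : Submodule.projectionOnto Hs Vs hcompl x = 0 := by
        simpa [hπdef, Submodule.coe_eq_zero] using hx
      have := LinearMap.mem_ker.mpr h0
      rwa [Submodule.ker_projectionOnto] at this
  have hdec : ∀ x : E, ∃ p ∈ Hs, ∃ q ∈ Vs, x = p + q := by
    intro x
    have hx : x ∈ Hs ⊔ Vs := by
      rw [codisjoint_iff.mp hcompl.codisjoint]; trivial
    rcases Submodule.mem_sup.mp hx with ⟨p, hp, q, hq, h⟩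
    exact ⟨p, hp, q, hq, h.symm⟩
  -- range of A is in Vs
  have hAran : ∀ s (x : E), A s x ∈ Vs := by
    intro s x
    rcases hdec x with ⟨p, hp, q, hq, rfl⟩
    rw [map_add, hAV s q hq, add_zero]
    exact hAH s p hp
  -- pointwise derivative of A
  have hAapp : ∀ t (x : E), HasDerivAt (fun s => A s x) (A' t x) t := by
    intro t x
    simpa using (hA t).clm_apply (hasDerivAt_const t x)
  -- A' vanishes on Vs
  have hA'V : ∀ t, ∀ v ∈ Vs, A' t v = 0 := by
    intro t v hv
    have h1 : HasDerivAt (fun s => A s v) (A' t v) t := hAapp t v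
    have h2 : (fun s => A s v) = fun _ => (0 : E) := by
      funext s; exact hAV s v hv
    rw [h2] at h1
    exact h1.unique (hasDerivAt_const t 0)
  -- range of A' lies in Vs
  have hA'ran : ∀ t (x : E), A' t x ∈ Vs := by
    intro t x
    rcases hdec x with ⟨p, hp, q, hq, rfl⟩
    rw [map_add, hA'V t q hq, add_zero]
    have h1 : HasDerivAt (fun s => π (A s p)) (π (A' t p)) t :=
      π.hasFDerivAt.comp_hasDerivAt t (hAapp t p)
    have h2 : (fun s => π (A s p)) = fun _ => (0 : E) := by
      funext s; exact (hπmem _).mp (hAH s p hp)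
    rw [h2] at h1
    have := h1.unique (hasDerivAt_const t 0)
    exact (hπmem _).mpr this
  -- (id + A t) ∘ (id - A t) = id
  have hpm : ∀ t (x : E),
      (ContinuousLinearMap.id ℝ E + A t) ((ContinuousLinearMap.id ℝ E - A t) x) = x := by
    intro t x
    have : A t (A t x) = 0 := hAV t _ (hAran t x)
    simp [ContinuousLinearMap.sub_apply, ContinuousLinearMap.add_apply, map_sub, this]
  -- continuity
  have hQcont : Continuous Q := by
    rw [continuous_iff_continuousAt]; exact fun t => (hQ t).continuousAt
  have hQhcont : Continuous Qh := by
    rw [continuous_iff_continuousAt]; exact fun t => (hQh t).continuousAt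
  have hAcont : Continuous A := by
    rw [continuous_iff_continuousAt]; exact fun t => (hA t).continuousAt
  have hinv_cont : ∀ (R Rinv : ℝ → E →L[ℝ] E), Continuous R →
      (∀ t, (Rinv t).comp (R t) = ContinuousLinearMap.id ℝ E ∧
        (R t).comp (Rinv t) = ContinuousLinearMap.id ℝ E) → Continuous Rinv := by
    intro R Rinv hRc hRi
    have hu : ∀ t, Rinv t = Ring.inverse (R t) := by
      intro t
      have h1 : (R t) * (Rinv t) = 1 := (hRi t).2
      have h2 : (Rinv t) * (R t) = 1 := (hRi t).1
      have : Ring.inverse ((⟨R t, Rinv t, h1, h2⟩ : (E →L[ℝ] E)ˣ) : E →L[ℝ] E)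
          = Rinv t := Ring.inverse_unit _
      simpa using this.symm
    simp only [funext hu]
    rw [continuous_iff_continuousAt]
    intro t
    exact ContinuousAt.comp (x := t) (NormedRing.inverse_continuousAt
      (⟨R t, Rinv t, (hRi t).2, (hRi t).1⟩ : (E →L[ℝ] E)ˣ)) hRc.continuousAt
  have hQinv_cont : Continuous Qinv := hinv_cont Q Qinv hQcont hQinv
  have hQhinv_cont : Continuous Qhinv := hinv_cont Qh Qhinv hQhcont hQhinv
  -- the function h and its derivative
  have hg1 : Continuous fun s => Qinv s (k' s) := hQinv_cont.clm_apply hk'_cont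
  set m : ℝ → E := fun t => ∫ s in (0:ℝ)..t, Qinv s (k' s) with hmdef
  have hm : ∀ t, HasDerivAt m (Qinv t (k' t)) t := fun t =>
    (hg1.integral_hasStrictDerivAt 0 t).hasDerivAt
  have hhQ : h = fun t => Q t (m t) := funext hh
  have hh' : ∀ t, HasDerivAt h (-(1/2 : ℝ) • Ric t (h t) + k' t) t := by
    intro t
    have h1 := (hQ t).clm_apply (hm t)
    rw [← hhQ] at h1
    have e1 : (Q t) (Qinv t (k' t)) = k' t := by
      have := ContinuousLinearMap.ext_iff.mp (hQinv t).2 (k' t)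
      simpa using this
    have e2 : (-(1/2 : ℝ) • (Ric t).comp (Q t)) (m t) = -(1/2 : ℝ) • Ric t (h t) := by
      rw [hh t]; simp; rfl
    rwa [e1, e2] at h1
  have hhcont : Continuous h := by
    rw [continuous_iff_continuousAt]; exact fun t => (hh' t).continuousAt
  -- the correction integral I
  have hg3 : Continuous fun s => A' s (h s) := hA'_cont.clm_apply hhcont
  set I : ℝ → E := fun t => ∫ s in (0:ℝ)..t, A' s (h s) with hIdef
  have hI : ∀ t, HasDerivAt I (A' t (h t)) t := fun t =>
    (hg3.integral_hasStrictDerivAt 0 t).hasDerivAt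
  have hIV : ∀ t, I t ∈ Vs := by
    intro t
    rw [hπmem]
    have hint : IntervalIntegrable (fun s => A' s (h s)) MeasureTheory.volume 0 t :=
      hg3.intervalIntegrable 0 t
    show π (∫ s in (0:ℝ)..t, A' s (h s)) = 0
    rw [← π.intervalIntegral_comp_comm hint]
    have : ∀ s, π (A' s (h s)) = 0 := fun s => (hπmem _).mp (hA'ran s (h s))
    simp [this]
  -- the left-hand side function f and auxiliary objects
  have hg2 : Continuous fun s => Qhinv s ((ContinuousLinearMap.id ℝ E - A s) (k' s)) :=
    hQhinv_cont.clm_apply ((continuous_const.sub hAcont).clm_apply hk'_cont)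
  set J : ℝ → E :=
    fun t => ∫ s in (0:ℝ)..t, Qhinv s ((ContinuousLinearMap.id ℝ E - A s) (k' s)) with hJdef
  have hJ : ∀ t, HasDerivAt J (Qhinv t ((ContinuousLinearMap.id ℝ E - A t) (k' t))) t :=
    fun t => (hg2.integral_hasStrictDerivAt 0 t).hasDerivAt
  set f : ℝ → E := fun t => ((ContinuousLinearMap.id ℝ E + A t).comp (Qh t)) (J t) with hfdef
  set r : ℝ → E := fun t => h t + I t with hrdef
  set B : ℝ → E →L[ℝ] E := fun s => A' s - (1/2 : ℝ) • Ric s with hBdef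
  have hBcont : Continuous B := hA'_cont.sub (hRic_cont.const_smul (1/2 : ℝ))
  have hBapp : ∀ t (x : E), B t x = A' t x - (1/2 : ℝ) • Ric t x := by
    intro t x; simp [hBdef]
  -- derivative of f
  have hf' : ∀ t, HasDerivAt f (k' t + B t (f t)) t := by
    intro t
    have hc : HasDerivAt (fun s => ContinuousLinearMap.id ℝ E + A s) (A' t) t := by
      simpa using hA t
    have hP := hc.clm_comp (hQh t)
    have h1 : HasDerivAt f
        (((A' t).comp (Qh t) + (ContinuousLinearMap.id ℝ E + A t).comp
          (-(1/2 : ℝ) • ((ContinuousLinearMap.id ℝ E - A t).comp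
            ((Ric t).comp ((ContinuousLinearMap.id ℝ E + A t).comp (Qh t)))))) (J t)
          + ((ContinuousLinearMap.id ℝ E + A t).comp (Qh t))
              (Qhinv t ((ContinuousLinearMap.id ℝ E - A t) (k' t)))) t :=
      hP.clm_apply (hJ t)
    convert h1 using 1
    -- identify the derivative value
    have e2 : ((ContinuousLinearMap.id ℝ E + A t).comp (Qh t))
        (Qhinv t ((ContinuousLinearMap.id ℝ E - A t) (k' t))) = k' t := by
      have hx := ContinuousLinearMap.ext_iff.mp (hQhinv t).2
        ((ContinuousLinearMap.id ℝ E - A t) (k' t))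
      simp only [ContinuousLinearMap.comp_apply] at hx ⊢
      rw [hx]
      simpa using hpm t (k' t)
    have eA : A' t (Qh t (J t)) = A' t (f t) := by
      have hft : f t = Qh t (J t) + A t (Qh t (J t)) := by
        simp [hfdef, ContinuousLinearMap.comp_apply, ContinuousLinearMap.add_apply]
      rw [hft, map_add, hA'V t _ (hAran t (Qh t (J t))), add_zero]
    have eW : ((ContinuousLinearMap.id ℝ E + A t))
        ((-(1/2 : ℝ) • ((ContinuousLinearMap.id ℝ E - A t).comp
          ((Ric t).comp ((ContinuousLinearMap.id ℝ E + A t).comp (Qh t))))) (J t))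
        = -(1/2 : ℝ) • Ric t (f t) := by
      simp only [ContinuousLinearMap.smul_apply, ContinuousLinearMap.comp_apply, map_smul]
      rw [hpm t]
      rfl
    calc k' t + B t (f t)
        = A' t (f t) + -(1/2 : ℝ) • Ric t (f t) + k' t := by
          rw [hBapp]; module
      _ = ((A' t).comp (Qh t) + (ContinuousLinearMap.id ℝ E + A t).comp
          (-(1/2 : ℝ) • ((ContinuousLinearMap.id ℝ E - A t).comp
            ((Ric t).comp ((ContinuousLinearMap.id ℝ E + A t).comp (Qh t)))))) (J t)
          + ((ContinuousLinearMap.id ℝ E + A t).comp (Qh t))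
              (Qhinv t ((ContinuousLinearMap.id ℝ E - A t) (k' t))) := by
          rw [e2, ContinuousLinearMap.add_apply, ContinuousLinearMap.comp_apply,
            ContinuousLinearMap.comp_apply, eA, eW]
  -- derivative of r
  have hr' : ∀ t, HasDerivAt r (k' t + B t (r t)) t := by
    intro t
    have h1 : HasDerivAt r ((-(1/2 : ℝ) • Ric t (h t) + k' t) + A' t (h t)) t :=
      (hh' t).add (hI t)
    convert h1 using 1
    have e1 : A' t (I t) = 0 := hA'V t _ (hIV t)
    have e2 : Ric t (I t) = 0 := hRicV t _ (hIV t)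
    have : r t = h t + I t := rfl
    rw [this, hBapp, map_add, map_add, e1, e2]
    module
  -- initial values
  have hf0 : f 0 = 0 := by
    have : J 0 = 0 := intervalIntegral.integral_same
    simp [hfdef, this]
  have hr0 : r 0 = 0 := by
    have hI0 : I 0 = 0 := intervalIntegral.integral_same
    have hm0 : m 0 = 0 := intervalIntegral.integral_same
    have : h 0 = 0 := by rw [hhQ]; simp [hm0]
    simp [hrdef, this, hI0]
  -- uniqueness of solutions of the linear ODE
  have hfcont : Continuous f := by
    rw [continuous_iff_continuousAt]; exact fun t => (hf' t).continuousAt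
  have hrcont : Continuous r := by
    rw [continuous_iff_continuousAt]; exact fun t => (hr' t).continuousAt
  have key : ∀ t, f t = r t := by
    intro t
    set b : ℝ := |t| + 1 with hbdef
    have hb : 0 < b := by positivity
    have htb : |t| ≤ b := by simp [hbdef]
    obtain ⟨C, hC⟩ := (isCompact_Icc (a := -b) (b := b)).exists_bound_of_continuousOn
      hBcont.continuousOn
    set v : ℝ → E → E := fun s y => k' (max (-b) (min s b)) + B (max (-b) (min s b)) y
      with hvdef
    have hmem : ∀ s : ℝ, max (-b) (min s b) ∈ Set.Icc (-b) b := by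
      intro s
      exact ⟨le_max_left _ _, max_le (by linarith) (min_le_right _ _)⟩
    have hlip : ∀ s, LipschitzWith C.toNNReal (v s) := by
      intro s
      apply LipschitzWith.of_dist_le_mul
      intro y z
      have hd : v s y - v s z = B (max (-b) (min s b)) (y - z) := by
        simp only [hvdef, map_sub]
        abel
      rw [dist_eq_norm, dist_eq_norm, hd]
      calc ‖B (max (-b) (min s b)) (y - z)‖
          ≤ ‖B (max (-b) (min s b))‖ * ‖y - z‖ := ContinuousLinearMap.le_opNorm _ _
        _ ≤ ↑C.toNNReal * ‖y - z‖ := by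
            apply mul_le_mul_of_nonneg_right _ (norm_nonneg _)
            refine le_trans (hC _ (hmem s)) ?_
            rw [Real.coe_toNNReal']
            exact le_max_left _ _
    have hveq : ∀ s ∈ Set.Ioo (-b) b, ∀ y : E, v s y = k' s + B s y := by
      intro s hs y
      have : max (-b) (min s b) = s := by
        rw [min_eq_left hs.2.le, max_eq_right hs.1.le]
      rw [hvdef]
      simp only [this]
    have ht0 : (0 : ℝ) ∈ Set.Ioo (-b) b := ⟨by linarith, hb⟩
    have heq := ODE_solution_unique_of_mem_Icc (v := v) (s := fun _ => Set.univ)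
      (fun s _ => (lipschitzOnWith_univ.mpr (hlip s))) ht0
      hfcont.continuousOn
      (fun s hs => by rw [hveq s hs]; exact hf' s)
      (fun _ _ => trivial)
      hrcont.continuousOn
      (fun s hs => by rw [hveq s hs]; exact hr' s)
      (fun _ _ => trivial)
      (by rw [hf0, hr0])
    exact heq ⟨neg_le_of_abs_le htb, le_of_abs_le htb⟩
  intro t
  exact key t
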